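/- Let X be a uniformly convex Banach space, C ⊆ X nonempty closed convex, T : C → C satisfying condition (C) with F(T) ≠ ∅, and (xₙ) the K iteration with αₙ, βₙ ∈ [a,b], 0 < a ≤ b < 1. Then (xₙ) is bounded and ‖Txₙ - xₙ‖ → 0. -/
import Mathlib

open Filter

/-- Convex combination bound from uniform convexity estimate. -/
private lemma comb_bound {E : Type*} [NormedAddCommGroup E] [NormedSpace ℝ E]
    {δ t : ℝ} {x y : E} (hx : ‖x‖ ≤ 1) (hy : ‖y‖ ≤ 1) (hxy : ‖x + y‖ ≤ 2 - δ)
    (ht0 : 0 ≤ t) (ht1 : t ≤ 1) (hδ : 0 ≤ δ) :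
    ‖(1 - t) • x + t • y‖ ≤ 1 - min t (1 - t) * δ := by
  rcases le_total t (1/2) with h | h
  · have hid : (1 - t) • x + t • y = t • (x + y) + (1 - 2*t) • x := by module
    have h1 : ‖(1 - t) • x + t • y‖ ≤ t * ‖x + y‖ + (1 - 2*t) * ‖x‖ := by
      rw [hid]
      calc ‖t • (x + y) + (1 - 2*t) • x‖ ≤ ‖t • (x + y)‖ + ‖(1 - 2*t) • x‖ := norm_add_le _ _
        _ = t * ‖x + y‖ + (1 - 2*t) * ‖x‖ := by
          rw [norm_smul, norm_smul, Real.norm_of_nonneg ht0,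
            Real.norm_of_nonneg (by linarith)]
    have hmin : min t (1 - t) = t := min_eq_left (by linarith)
    rw [hmin]
    nlinarith [norm_nonneg (x + y)]
  · have hid : (1 - t) • x + t • y = (1 - t) • (x + y) + (2*t - 1) • y := by module
    have h1 : ‖(1 - t) • x + t • y‖ ≤ (1 - t) * ‖x + y‖ + (2*t - 1) * ‖y‖ := by
      rw [hid]
      calc ‖(1 - t) • (x + y) + (2*t - 1) • y‖ ≤ ‖(1 - t) • (x + y)‖ + ‖(2*t - 1) • y‖ :=
            norm_add_le _ _
        _ = (1 - t) * ‖x + y‖ + (2*t - 1) * ‖y‖ := by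
          rw [norm_smul, norm_smul, Real.norm_of_nonneg (by linarith),
            Real.norm_of_nonneg (by linarith)]
    have hmin : min t (1 - t) = 1 - t := min_eq_right (by linarith)
    rw [hmin]
    nlinarith [norm_nonneg (x + y)]

/-- Schu's lemma in a uniformly convex space. -/
private lemma schu {X : Type*} [NormedAddCommGroup X] [NormedSpace ℝ X] [UniformConvexSpace X]
    {a b : ℝ} (ha : 0 < a) (hb : b < 1)
    {t : ℕ → ℝ} (ht : ∀ n, t n ∈ Set.Icc a b)
    {u v : ℕ → X} {d : ℕ → ℝ} {c : ℝ}
    (hd : Tendsto d atTop (nhds c))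
    (hu : ∀ n, ‖u n‖ ≤ d n) (hv : ∀ n, ‖v n‖ ≤ d n)
    (hm : Tendsto (fun n => ‖(1 - t n) • u n + t n • v n‖) atTop (nhds c)) :
    Tendsto (fun n => ‖u n - v n‖) atTop (nhds 0) := by
  have hc0 : 0 ≤ c := le_of_tendsto_of_tendsto' tendsto_const_nhds hm
    (fun n => norm_nonneg _)
  rcases eq_or_lt_of_le hc0 with hc | hc
  · -- c = 0 : squeeze by 2 * d n
    have hle : ∀ n, ‖u n - v n‖ ≤ 2 * d n := fun n => by
      calc ‖u n - v n‖ ≤ ‖u n‖ + ‖v n‖ := norm_sub_le _ _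
        _ ≤ 2 * d n := by linarith [hu n, hv n]
    have h2d : Tendsto (fun n => 2 * d n) atTop (nhds 0) := by
      have := hd.const_mul 2
      rwa [← hc, mul_zero] at this
    exact tendsto_of_tendsto_of_tendsto_of_le_of_le tendsto_const_nhds h2d
      (fun n => norm_nonneg _) hle
  · -- c > 0
    rw [Metric.tendsto_atTop]
    intro ε hε
    obtain ⟨δ₀, hδ₀, hδ⟩ := exists_forall_closed_ball_dist_add_le_two_sub X
      (show (0:ℝ) < ε / (2 * c) by positivity)
    set δ : ℝ := min δ₀ 1 with hδdef
    have hδpos : 0 < δ := lt_min hδ₀ one_pos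
    have hδ1 : δ ≤ 1 := min_le_right _ _
    set lam : ℝ := min a (1 - b) with hlam
    have hlampos : 0 < lam := lt_min ha (by linarith)
    have hlam1 : lam ≤ 1 := le_trans (min_le_right _ _) (by linarith [ha.le, (ht 0).1,
      (ht 0).2])
    set σ : ℝ := c * lam * δ / 2 with hσ
    have hσpos : 0 < σ := by positivity
    have hσc : σ ≤ c / 2 := by
      rw [hσ]
      have : lam * δ ≤ 1 := by
        calc lam * δ ≤ 1 * 1 := mul_le_mul hlam1 hδ1 hδpos.le one_pos.le
          _ = 1 := one_mul 1
      nlinarith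
    have hdN := (Metric.tendsto_atTop.mp hd) σ hσpos
    have hmN := (Metric.tendsto_atTop.mp hm) σ hσpos
    obtain ⟨N₁, hN₁⟩ := hdN
    obtain ⟨N₂, hN₂⟩ := hmN
    refine ⟨max N₁ N₂, fun n hn => ?_⟩
    have hd_n : d n < c + σ := by
      have := hN₁ n (le_trans (le_max_left _ _) hn)
      rw [Real.dist_eq] at this
      linarith [abs_lt.mp this |>.2]
    have hm_n : c - σ < ‖(1 - t n) • u n + t n • v n‖ := by
      have := hN₂ n (le_trans (le_max_right _ _) hn)
      rw [Real.dist_eq] at this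
      linarith [abs_lt.mp this |>.1]
    rw [Real.dist_eq, sub_zero, abs_of_nonneg (norm_nonneg _)]
    by_contra hcon
    push_neg at hcon
    -- hcon : ε ≤ ‖u n - v n‖
    set R : ℝ := c + σ with hR
    have hRpos : 0 < R := by positivity
    have hdR : d n ≤ R := hd_n.le
    have hx1 : ‖R⁻¹ • u n‖ ≤ 1 := by
      rw [norm_smul, Real.norm_of_nonneg (by positivity)]
      rw [inv_mul_le_iff₀ hRpos, mul_one]
      exact le_trans (hu n) hdR
    have hy1 : ‖R⁻¹ • v n‖ ≤ 1 := by
      rw [norm_smul, Real.norm_of_nonneg (by positivity)]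
      rw [inv_mul_le_iff₀ hRpos, mul_one]
      exact le_trans (hv n) hdR
    have hsep : ε / (2 * c) ≤ ‖R⁻¹ • u n - R⁻¹ • v n‖ := by
      rw [← smul_sub, norm_smul, Real.norm_of_nonneg (by positivity)]
      have hR2c : R ≤ 2 * c := by rw [hR]; linarith
      calc ε / (2 * c) ≤ ε / R := by
            apply div_le_div_of_nonneg_left hε.le hRpos hR2c
        _ = R⁻¹ * ε := by rw [div_eq_inv_mul]
        _ ≤ R⁻¹ * ‖u n - v n‖ := by
            apply mul_le_mul_of_nonneg_left hcon (by positivity)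
    have hsum := hδ hx1 hy1 hsep
    have hsum' : ‖R⁻¹ • u n + R⁻¹ • v n‖ ≤ 2 - δ := by
      calc ‖R⁻¹ • u n + R⁻¹ • v n‖ ≤ 2 - δ₀ := hsum
        _ ≤ 2 - δ := by have := min_le_left δ₀ 1; rw [hδdef]; linarith
    have hcomb := comb_bound (t := t n) hx1 hy1 hsum' (by linarith [(ht n).1])
      (by linarith [(ht n).2]) hδpos.le
    -- scale back
    have hmint : lam ≤ min (t n) (1 - t n) := le_min
      (le_trans (min_le_left _ _) (ht n).1)
      (le_trans (min_le_right _ _) (by linarith [(ht n).2]))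
    have hkey : ‖(1 - t n) • u n + t n • v n‖ ≤ R * (1 - lam * δ) := by
      have hid : (1 - t n) • u n + t n • v n
          = R • ((1 - t n) • (R⁻¹ • u n) + t n • (R⁻¹ • v n)) := by
        rw [smul_add, smul_comm R (1 - t n) (R⁻¹ • u n), smul_comm R (t n) (R⁻¹ • v n),
          smul_inv_smul₀ hRpos.ne', smul_inv_smul₀ hRpos.ne']
      rw [hid, norm_smul, Real.norm_of_nonneg hRpos.le]
      apply mul_le_mul_of_nonneg_left _ hRpos.le
      calc ‖(1 - t n) • (R⁻¹ • u n) + t n • (R⁻¹ • v n)‖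
          ≤ 1 - min (t n) (1 - t n) * δ := hcomb
        _ ≤ 1 - lam * δ := by nlinarith
    have : R * (1 - lam * δ) ≤ c - σ := by
      rw [hR, hσ]
      have hσle : 0 ≤ σ * lam * δ := by positivity
      nlinarith [hσpos.le]
    linarith

theorem stmt_12 {X : Type*} [NormedAddCommGroup X] [NormedSpace ℝ X]
    [UniformConvexSpace X] [CompleteSpace X]
    (C : Set X) (hCne : C.Nonempty) (hCcl : IsClosed C) (hCcv : Convex ℝ C)
    (T : X → X) (hTC : ∀ x ∈ C, T x ∈ C)
    (hC : ∀ x ∈ C, ∀ y ∈ C, (1 / 2) * ‖x - T x‖ ≤ ‖x - y‖ → ‖T x - T y‖ ≤ ‖x - y‖)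
    (hF : ∃ p ∈ C, T p = p)
    (a b : ℝ) (ha : 0 < a) (hab : a ≤ b) (hb : b < 1)
    (α β : ℕ → ℝ) (hα : ∀ n, α n ∈ Set.Icc a b) (hβ : ∀ n, β n ∈ Set.Icc a b)
    (x z y : ℕ → X) (hx0 : x 0 ∈ C)
    (hz : ∀ n, z n = (1 - β n) • x n + β n • T (x n))
    (hy : ∀ n, y n = T ((1 - α n) • T (x n) + α n • T (z n)))
    (hx : ∀ n, x (n + 1) = T (y n)) :
    Bornology.IsBounded (Set.range x) ∧
      Tendsto (fun n => ‖T (x n) - x n‖) atTop (nhds 0) := by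
  obtain ⟨p, hpC, hTp⟩ := hF
  -- quasi-nonexpansiveness at p
  have qne : ∀ w ∈ C, ‖T w - p‖ ≤ ‖w - p‖ := by
    intro w hw
    have h0 : (1 / 2 : ℝ) * ‖p - T p‖ ≤ ‖p - w‖ := by
      rw [hTp, sub_self, norm_zero, mul_zero]
      exact norm_nonneg _
    have h1 := hC p hpC w hw h0
    rw [hTp] at h1
    calc ‖T w - p‖ = ‖p - T w‖ := (norm_sub_rev _ _)
      _ ≤ ‖p - w‖ := h1
      _ = ‖w - p‖ := norm_sub_rev _ _
  -- coefficient facts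
  have hβ0 : ∀ n, 0 ≤ β n := fun n => le_trans ha.le (hβ n).1
  have hβ1 : ∀ n, β n ≤ 1 := fun n => le_trans (hβ n).2 hb.le
  have hα0 : ∀ n, 0 ≤ α n := fun n => le_trans ha.le (hα n).1
  have hα1 : ∀ n, α n ≤ 1 := fun n => le_trans (hα n).2 hb.le
  -- memberships
  have hzC : ∀ n, x n ∈ C → z n ∈ C := fun n hn => by
    rw [hz n]
    exact hCcv hn (hTC _ hn) (by linarith [hβ1 n]) (hβ0 n) (by ring)
  have hwC : ∀ n, x n ∈ C → (1 - α n) • T (x n) + α n • T (z n) ∈ C := fun n hn => by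
    exact hCcv (hTC _ hn) (hTC _ (hzC n hn)) (by linarith [hα1 n]) (hα0 n) (by ring)
  have hmem : ∀ n, x n ∈ C := by
    intro n
    induction n with
    | zero => exact hx0
    | succ n ih =>
      rw [hx n, hy n]
      exact hTC _ (hTC _ (hwC n ih))
  set d : ℕ → ℝ := fun n => ‖x n - p‖ with hddef
  have hz_le : ∀ n, ‖z n - p‖ ≤ d n := by
    intro n
    have hid : z n - p = (1 - β n) • (x n - p) + β n • (T (x n) - p) := by
      rw [hz n]; module
    rw [hid]
    calc ‖(1 - β n) • (x n - p) + β n • (T (x n) - p)‖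
        ≤ ‖(1 - β n) • (x n - p)‖ + ‖β n • (T (x n) - p)‖ := norm_add_le _ _
      _ = (1 - β n) * ‖x n - p‖ + β n * ‖T (x n) - p‖ := by
          rw [norm_smul, norm_smul, Real.norm_of_nonneg (by linarith [hβ1 n]),
            Real.norm_of_nonneg (hβ0 n)]
      _ ≤ (1 - β n) * d n + β n * d n := by
          have := qne (x n) (hmem n)
          have h1 : β n * ‖T (x n) - p‖ ≤ β n * d n :=
            mul_le_mul_of_nonneg_left this (hβ0 n)
          simp only [hddef]
          linarith
      _ = d n := by ring
  have hstep : ∀ n, d (n + 1) ≤ (1 - α n) * d n + α n * ‖z n - p‖ := by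
    intro n
    have hyC : y n ∈ C := by rw [hy n]; exact hTC _ (hwC n (hmem n))
    have h1 : d (n + 1) ≤ ‖y n - p‖ := by
      simp only [hddef, hx n]
      exact qne (y n) hyC
    have h2 : ‖y n - p‖ ≤ ‖(1 - α n) • T (x n) + α n • T (z n) - p‖ := by
      rw [hy n]
      exact qne _ (hwC n (hmem n))
    have hid : (1 - α n) • T (x n) + α n • T (z n) - p
        = (1 - α n) • (T (x n) - p) + α n • (T (z n) - p) := by module
    have h3 : ‖(1 - α n) • T (x n) + α n • T (z n) - p‖
        ≤ (1 - α n) * d n + α n * ‖z n - p‖ := by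
      rw [hid]
      calc ‖(1 - α n) • (T (x n) - p) + α n • (T (z n) - p)‖
          ≤ ‖(1 - α n) • (T (x n) - p)‖ + ‖α n • (T (z n) - p)‖ := norm_add_le _ _
        _ = (1 - α n) * ‖T (x n) - p‖ + α n * ‖T (z n) - p‖ := by
            rw [norm_smul, norm_smul, Real.norm_of_nonneg (by linarith [hα1 n]),
              Real.norm_of_nonneg (hα0 n)]
        _ ≤ (1 - α n) * d n + α n * ‖z n - p‖ := by
            have q1 := qne (x n) (hmem n)
            have q2 := qne (z n) (hzC n (hmem n))
            have := mul_le_mul_of_nonneg_left q1 (by linarith [hα1 n] : (0:ℝ) ≤ 1 - α n)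
            have := mul_le_mul_of_nonneg_left q2 (hα0 n)
            simp only [hddef]
            linarith
    linarith
  have hanti : Antitone d := by
    apply antitone_nat_of_succ_le
    intro n
    have h1 := hstep n
    have h2 := hz_le n
    nlinarith [hα0 n, hα1 n]
  constructor
  · rw [isBounded_iff_forall_norm_le]
    refine ⟨d 0 + ‖p‖, ?_⟩
    rintro _ ⟨n, rfl⟩
    calc ‖x n‖ = ‖x n - p + p‖ := by rw [sub_add_cancel]
      _ ≤ ‖x n - p‖ + ‖p‖ := norm_add_le _ _
      _ ≤ d 0 + ‖p‖ := by
          have := hanti (Nat.zero_le n)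
          simp only [hddef] at this ⊢
          linarith
  · have hbdd : BddBelow (Set.range d) := by
      refine ⟨0, ?_⟩
      rintro r ⟨n, rfl⟩
      exact norm_nonneg _
    set c : ℝ := ⨅ n, d n with hcdef
    have hdc : Tendsto d atTop (nhds c) := tendsto_atTop_ciInf hanti hbdd
    have hdc' : Tendsto (fun n => d (n + 1)) atTop (nhds c) :=
      hdc.comp (tendsto_add_atTop_nat 1)
    have hzc : Tendsto (fun n => ‖z n - p‖) atTop (nhds c) := by
      have hg : Tendsto (fun n => d n - (d n - d (n + 1)) / a) atTop
          (nhds (c - (c - c) / a)) := hdc.sub ((hdc.sub hdc').div_const a)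
      rw [sub_self, zero_div, sub_zero] at hg
      apply tendsto_of_tendsto_of_tendsto_of_le_of_le hg hdc _ hz_le
      intro n
      have h1 : a * (d n - ‖z n - p‖) ≤ d n - d (n + 1) := by
        have h2 := hstep n
        have h3 := hz_le n
        nlinarith [(hα n).1]
      have h4 : d n - ‖z n - p‖ ≤ (d n - d (n + 1)) / a := by
        rw [le_div_iff₀ ha]
        linarith
      linarith
    have hu : ∀ n, ‖x n - p‖ ≤ d n := fun n => le_refl _
    have hv : ∀ n, ‖T (x n) - p‖ ≤ d n := fun n => qne (x n) (hmem n)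
    have hm : Tendsto (fun n => ‖(1 - β n) • (x n - p) + β n • (T (x n) - p)‖)
        atTop (nhds c) := by
      convert hzc using 2 with n
      rw [hz n]; congr 1; module
    have hfinal := schu ha hb hβ hdc hu hv hm
    have : (fun n => ‖(x n - p) - (T (x n) - p)‖) = fun n => ‖T (x n) - x n‖ := by
      funext n
      rw [norm_sub_rev]
      congr 1
      abel
    rwa [this] at hfinal
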